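/- arXiv:1502.01684 — 4 statements merged into one kernel-verified Lean document; each statement's English description precedes it below -/
import Mathlib

section
/- Suppose the density f is bounded and has no flat parts (Leb({f = c}) = 0 for all c ≥ 0). Then EM* is differentiable on (0, ‖f‖∞) with derivative EM*'(t) = −λ(t), where λ(t) = Leb({x : f(x) ≥ t}). -/
open MeasureTheory Filter Topology

noncomputable def excessMass {d : ℕ} (f : (Fin d → ℝ) → ℝ) (t : ℝ)
    (Ω : Set (Fin d → ℝ)) : ℝ :=
  (∫ x in Ω, f x) - t * (volume Ω).toReal

noncomputable def EMstar {d : ℕ} (f : (Fin d → ℝ) → ℝ) (t : ℝ) : ℝ :=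
  ⨆ Ω : {Ω : Set (Fin d → ℝ) // MeasurableSet Ω ∧ volume Ω ≠ ⊤},
    excessMass f t Ω

section Aux

variable {d : ℕ} {f : (Fin d → ℝ) → ℝ}

lemma EM.markov (hf_int : Integrable f) {s : ℝ} (hs : 0 < s) :
    volume {x : Fin d → ℝ | s ≤ f x} ≠ ⊤ :=
  (hf_int.measure_ge_lt_top hs).ne

lemma EM.integrable_max (hf_meas : Measurable f) (hf_nonneg : ∀ x, 0 ≤ f x)
    (hf_int : Integrable f) {t : ℝ} (ht : 0 ≤ t) :
    Integrable (fun x : Fin d → ℝ => max (f x - t) 0) := by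
  refine hf_int.mono
    (((hf_meas.sub measurable_const).max measurable_const).aestronglyMeasurable) ?_
  filter_upwards with x
  rw [Real.norm_eq_abs, Real.norm_eq_abs, abs_of_nonneg (le_max_right _ _),
    abs_of_nonneg (hf_nonneg x)]
  exact max_le (by linarith) (hf_nonneg x)

lemma EM.excess_eq (hf_int : Integrable f) {t : ℝ}
    {Ω : Set (Fin d → ℝ)} (hvol : volume Ω ≠ ⊤) :
    excessMass f t Ω = ∫ x in Ω, (f x - t) := by
  have hconst : IntegrableOn (fun _ : Fin d → ℝ => t) Ω volume :=
    integrableOn_const hvol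
  rw [excessMass, integral_sub hf_int.integrableOn hconst, setIntegral_const, smul_eq_mul,
    mul_comm]
  rfl

lemma EM.excess_le (hf_meas : Measurable f) (hf_nonneg : ∀ x, 0 ≤ f x)
    (hf_int : Integrable f) {t : ℝ} (ht : 0 ≤ t)
    {Ω : Set (Fin d → ℝ)} (hΩ : MeasurableSet Ω) (hvol : volume Ω ≠ ⊤) :
    excessMass f t Ω ≤ ∫ x, max (f x - t) 0 := by
  have hconst : IntegrableOn (fun _ : Fin d → ℝ => t) Ω volume :=
    integrableOn_const hvol
  rw [EM.excess_eq hf_int hvol]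
  calc ∫ x in Ω, (f x - t)
      ≤ ∫ x in Ω, max (f x - t) 0 :=
        setIntegral_mono_on (hf_int.integrableOn.sub hconst)
          ((EM.integrable_max hf_meas hf_nonneg hf_int ht).integrableOn) hΩ
          (fun x _ => le_max_left _ _)
    _ ≤ ∫ x, max (f x - t) 0 :=
        setIntegral_le_integral (EM.integrable_max hf_meas hf_nonneg hf_int ht)
          (Eventually.of_forall fun x => le_max_right _ _)

lemma EM.excess_attain (hf_meas : Measurable f) (hf_int : Integrable f) {t : ℝ} (ht : 0 < t) :
    excessMass f t {x | t ≤ f x} = ∫ x, max (f x - t) 0 := by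
  have hΩ : MeasurableSet {x : Fin d → ℝ | t ≤ f x} :=
    measurableSet_le measurable_const hf_meas
  have hvol : volume {x : Fin d → ℝ | t ≤ f x} ≠ ⊤ := EM.markov hf_int ht
  rw [EM.excess_eq hf_int hvol]
  rw [← setIntegral_eq_integral_of_forall_compl_eq_zero
    (s := {x : Fin d → ℝ | t ≤ f x}) (f := fun x => max (f x - t) 0)
    (fun x hx => max_eq_right (by simp only [Set.mem_setOf_eq, not_le] at hx; linarith))]
  exact setIntegral_congr_fun hΩ fun x hx =>
    (max_eq_left (by simp only [Set.mem_setOf_eq] at hx; linarith)).symm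

lemma EM.bddAbove (hf_meas : Measurable f) (hf_nonneg : ∀ x, 0 ≤ f x)
    (hf_int : Integrable f) {t : ℝ} (ht : 0 ≤ t) :
    BddAbove (Set.range fun Ω : {Ω : Set (Fin d → ℝ) // MeasurableSet Ω ∧ volume Ω ≠ ⊤} =>
      excessMass f t Ω) := by
  refine ⟨∫ x, max (f x - t) 0, ?_⟩
  rintro y ⟨Ω, rfl⟩
  exact EM.excess_le hf_meas hf_nonneg hf_int ht Ω.2.1 Ω.2.2

lemma EM.eq (hf_meas : Measurable f) (hf_nonneg : ∀ x, 0 ≤ f x)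
    (hf_int : Integrable f) {t : ℝ} (ht : 0 < t) :
    EMstar f t = ∫ x, max (f x - t) 0 := by
  have hne : Nonempty {Ω : Set (Fin d → ℝ) // MeasurableSet Ω ∧ volume Ω ≠ ⊤} :=
    ⟨⟨∅, MeasurableSet.empty, by simp⟩⟩
  refine le_antisymm
    (ciSup_le fun Ω => EM.excess_le hf_meas hf_nonneg hf_int ht.le Ω.2.1 Ω.2.2) ?_
  rw [← EM.excess_attain hf_meas hf_int ht]
  exact le_ciSup (EM.bddAbove hf_meas hf_nonneg hf_int ht.le)
    ⟨{x | t ≤ f x}, measurableSet_le measurable_const hf_meas, EM.markov hf_int ht⟩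

lemma EM.key (hf_meas : Measurable f) (hf_nonneg : ∀ x, 0 ≤ f x)
    (hf_int : Integrable f) {s u : ℝ} (hs : 0 < s) (hu : 0 < u) :
    EMstar f u - (s - u) * (volume {x | u ≤ f x}).toReal ≤ EMstar f s := by
  set Ω : Set (Fin d → ℝ) := {x | u ≤ f x} with hΩdef
  have hΩ : MeasurableSet Ω := measurableSet_le measurable_const hf_meas
  have hvol : volume Ω ≠ ⊤ := EM.markov hf_int hu
  have h1 : excessMass f s Ω = excessMass f u Ω - (s - u) * (volume Ω).toReal := by
    unfold excessMass; ring
  have h2 : excessMass f s Ω ≤ EMstar f s :=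
    le_ciSup (EM.bddAbove hf_meas hf_nonneg hf_int hs.le) ⟨Ω, hΩ, hvol⟩
  have h3 : excessMass f u Ω = EMstar f u := by
    rw [EM.excess_attain hf_meas hf_int hu, EM.eq hf_meas hf_nonneg hf_int hu]
  rw [h1, h3] at h2
  exact h2

lemma EM.lam_cont (hf_meas : Measurable f) (hf_int : Integrable f)
    (hA2 : ∀ c : ℝ, 0 ≤ c → volume {x : Fin d → ℝ | f x = c} = 0) {t : ℝ} (ht : 0 < t) :
    Tendsto (fun s : ℝ => (volume {x : Fin d → ℝ | s ≤ f x}).toReal) (𝓝 t)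
      (𝓝 (volume {x : Fin d → ℝ | t ≤ f x}).toReal) := by
  set lam : ℝ → ℝ := fun s => (volume {x : Fin d → ℝ | s ≤ f x}).toReal with hlam
  have hanti : ∀ a b : ℝ, 0 < a → a ≤ b → lam b ≤ lam a := fun a b ha hab =>
    ENNReal.toReal_mono (EM.markov hf_int ha)
      (measure_mono fun x hx => le_trans hab hx)
  -- from below
  set sn : ℕ → ℝ := fun n => max (t / 2) (t - 1 / (n + 1)) with hsn
  have hsn_lt : ∀ n, sn n < t := fun n => max_lt (by linarith) (by
    have : (0:ℝ) < 1 / (n + 1) := by positivity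
    linarith)
  have hsn_pos : ∀ n, 0 < sn n := fun n => lt_of_lt_of_le (by linarith) (le_max_left _ _)
  have hsnmono : Monotone sn := fun m n hmn => max_le_max le_rfl (by
    have hmn' : (m:ℝ) ≤ n := Nat.cast_le.2 hmn
    have : (1:ℝ) / (n + 1) ≤ 1 / (m + 1) :=
      one_div_le_one_div_of_le (by positivity) (by linarith)
    linarith)
  have hmonoA : Antitone fun n => {x : Fin d → ℝ | sn n ≤ f x} := fun m n hmn x hx =>
    le_trans (hsnmono hmn) hx
  have hInter : ⋂ n, {x : Fin d → ℝ | sn n ≤ f x} = {x | t ≤ f x} := by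
    ext x
    simp only [Set.mem_iInter, Set.mem_setOf_eq]
    constructor
    · intro h
      by_contra hc
      push_neg at hc
      obtain ⟨n, hn⟩ := exists_nat_one_div_lt (sub_pos.2 hc)
      have h1 : t - 1 / (n + 1) ≤ sn n := le_max_right _ _
      have := h n
      linarith
    · intro h n
      exact le_trans (hsn_lt n).le h
  have htoA : Tendsto (fun n => volume {x : Fin d → ℝ | sn n ≤ f x}) atTop
      (𝓝 (volume {x : Fin d → ℝ | t ≤ f x})) := by
    have := tendsto_measure_iInter_atTop (μ := volume)
      (fun n => (measurableSet_le measurable_const hf_meas).nullMeasurableSet)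
      hmonoA ⟨0, EM.markov hf_int (hsn_pos 0)⟩
    rwa [hInter] at this
  have hA : Tendsto (fun n => lam (sn n)) atTop (𝓝 (lam t)) :=
    (ENNReal.tendsto_toReal (EM.markov hf_int ht)).comp htoA
  -- from above
  set un : ℕ → ℝ := fun n => t + 1 / (n + 1) with hun
  have hun_gt : ∀ n, t < un n := fun n => by
    have : (0:ℝ) < 1 / (n + 1) := by positivity
    simp only [hun]; linarith
  have hmonoB : Monotone fun n => {x : Fin d → ℝ | un n ≤ f x} := by
    intro m n hmn x hx
    simp only [Set.mem_setOf_eq, hun] at hx ⊢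
    have hmn' : (m:ℝ) ≤ n := Nat.cast_le.2 hmn
    have h1 : (1:ℝ) / (n + 1) ≤ 1 / (m + 1) :=
      one_div_le_one_div_of_le (by positivity) (by linarith)
    linarith
  have hUnion : ⋃ n, {x : Fin d → ℝ | un n ≤ f x} = {x | t < f x} := by
    ext x
    simp only [Set.mem_iUnion, Set.mem_setOf_eq]
    constructor
    · rintro ⟨n, hn⟩
      exact lt_of_lt_of_le (hun_gt n) hn
    · intro h
      obtain ⟨n, hn⟩ := exists_nat_one_div_lt (sub_pos.2 h)
      exact ⟨n, by simp only [hun]; linarith⟩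
  have hsplit : volume {x : Fin d → ℝ | t < f x} = volume {x : Fin d → ℝ | t ≤ f x} := by
    refine le_antisymm (measure_mono ?_) ?_
    · intro x hx
      simp only [Set.mem_setOf_eq] at hx ⊢
      exact le_of_lt hx
    calc volume {x : Fin d → ℝ | t ≤ f x}
        ≤ volume ({x : Fin d → ℝ | t < f x} ∪ {x : Fin d → ℝ | f x = t}) := by
          refine measure_mono ?_
          intro x hx
          simp only [Set.mem_setOf_eq, Set.mem_union] at hx ⊢
          rcases lt_or_eq_of_le hx with h | h
          · exact Or.inl h
          · exact Or.inr h.symm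
      _ ≤ volume {x : Fin d → ℝ | t < f x} + volume {x : Fin d → ℝ | f x = t} :=
          measure_union_le _ _
      _ = volume {x : Fin d → ℝ | t < f x} := by rw [hA2 t ht.le, add_zero]
  have htoB : Tendsto (fun n => volume {x : Fin d → ℝ | un n ≤ f x}) atTop
      (𝓝 (volume {x : Fin d → ℝ | t ≤ f x})) := by
    have := tendsto_measure_iUnion_atTop (μ := volume) hmonoB
    rwa [hUnion, hsplit] at this
  have hB : Tendsto (fun n => lam (un n)) atTop (𝓝 (lam t)) :=
    (ENNReal.tendsto_toReal (EM.markov hf_int ht)).comp htoB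
  -- assemble
  rw [Metric.tendsto_nhds]
  intro ε hε
  obtain ⟨n1, hn1⟩ := (hA.eventually (eventually_lt_nhds (by linarith : lam t < lam t + ε))).exists
  obtain ⟨n2, hn2⟩ := (hB.eventually (eventually_gt_nhds (by linarith : lam t - ε < lam t))).exists
  have hmem : Set.Ioo (sn n1) (un n2) ∈ 𝓝 t := Ioo_mem_nhds (hsn_lt n1) (hun_gt n2)
  filter_upwards [hmem] with s hs
  have hs0 : 0 < s := lt_trans (hsn_pos n1) hs.1
  rw [Real.dist_eq, abs_lt]
  constructor
  · have h1 : lam (un n2) ≤ lam s := hanti s (un n2) hs0 hs.2.le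
    linarith
  · have h2 : lam s ≤ lam (sn n1) := hanti (sn n1) s (hsn_pos n1) hs.1.le
    linarith

end Aux

theorem EMstar_hasDerivAt {d : ℕ} (f : (Fin d → ℝ) → ℝ)
    (hf_meas : Measurable f) (hf_nonneg : ∀ x, 0 ≤ f x)
    (hf_int : Integrable f) (hf_prob : (∫ x, f x) = 1)
    (C : ℝ) (hf_bdd : ∀ x, f x ≤ C)
    (hA2 : ∀ c : ℝ, 0 ≤ c → volume {x | f x = c} = 0) :
    ∀ t ∈ Set.Ioo 0 (essSup f volume),
      HasDerivAt (EMstar f) (-(volume {x | t ≤ f x}).toReal) t := by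
  intro t ht
  obtain ⟨ht0, -⟩ := ht
  set lam : ℝ → ℝ := fun s => (volume {x : Fin d → ℝ | s ≤ f x}).toReal with hlam
  rw [hasDerivAt_iff_tendsto_slope]
  have hIoi : Set.Ioi (0:ℝ) ∈ 𝓝[≠] t := nhdsWithin_le_nhds (Ioi_mem_nhds ht0)
  have hbound : ∀ᶠ s in 𝓝[≠] t,
      |slope (EMstar f) t s - (-(lam t))| ≤ |lam s - lam t| := by
    filter_upwards [hIoi, self_mem_nhdsWithin] with s hs hst
    have hs0 : 0 < s := hs
    have hst' : s ≠ t := hst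
    have h1 := EM.key hf_meas hf_nonneg hf_int hs0 ht0
    have h2 := EM.key hf_meas hf_nonneg hf_int ht0 hs0
    -- h1 : EMstar f t - (s - t) * lam t ≤ EMstar f s
    -- h2 : EMstar f s - (t - s) * lam s ≤ EMstar f t
    rw [slope_def_field]
    have e1 : lam t = (volume {x : Fin d → ℝ | t ≤ f x}).toReal := rfl
    have e2 : lam s = (volume {x : Fin d → ℝ | s ≤ f x}).toReal := rfl
    rw [← e1] at h1
    rw [← e2] at h2
    have h3 : lam t - lam s ≤ |lam s - lam t| := by
      rw [abs_sub_comm]; exact le_abs_self _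
    have h5 : lam s - lam t ≤ |lam s - lam t| := le_abs_self _
    rcases lt_or_gt_of_ne hst' with h | h
    · -- s < t
      have hc : s - t < 0 := by linarith
      have hq1 : (EMstar f s - EMstar f t) / (s - t) ≤ -(lam t) := by
        rw [div_le_iff_of_neg hc]; nlinarith
      have hq2 : -(lam s) ≤ (EMstar f s - EMstar f t) / (s - t) := by
        rw [le_div_iff_of_neg hc]; nlinarith
      rw [abs_le]
      constructor <;> [linarith; nlinarith [abs_nonneg (lam s - lam t)]]
    · -- t < s
      have hc : 0 < s - t := by linarith
      have hq1 : -(lam t) ≤ (EMstar f s - EMstar f t) / (s - t) := by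
        rw [le_div_iff₀ hc]; nlinarith
      have hq2 : (EMstar f s - EMstar f t) / (s - t) ≤ -(lam s) := by
        rw [div_le_iff₀ hc]; nlinarith
      rw [abs_le]
      constructor <;> [nlinarith [abs_nonneg (lam s - lam t)]; linarith]
  have hlamt : Tendsto (fun s => |lam s - lam t|) (𝓝[≠] t) (𝓝 0) := by
    have h0 : Tendsto (fun s => lam s - lam t) (𝓝 t) (𝓝 (lam t - lam t)) :=
      (EM.lam_cont hf_meas hf_int hA2 ht0).sub_const (lam t)
    rw [sub_self] at h0
    have := h0.abs
    rw [abs_zero] at this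
    exact this.mono_left nhdsWithin_le_nhds
  rw [tendsto_iff_dist_tendsto_zero]
  refine squeeze_zero' (Eventually.of_forall fun s => dist_nonneg) ?_ hlamt
  filter_upwards [hbound] with s hb
  rw [Real.dist_eq]
  exact hb
end

section
/- Let μ be a finite measure (e.g. an empirical measure), let t_K < t_{K−1} < ... < t_1 be positive reals, let G be a class of Borel sets closed under finite unions and intersections, and for each k let Ω̂_k ∈ G maximize μ(Ω) − t_k·Leb(Ω) over Ω ∈ G. Then for each k, the sets ∪_{i ≤ k} Ω̂_i and ∩_{i ≥ k} Ω̂_i are also maximizers of Ω ↦ μ(Ω) − t_k·Leb(Ω) over G. -/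
open MeasureTheory

/-- Empirical excess-mass functional: `H_{μ,t}(Ω) = μ(Ω) - t·Leb(Ω)`. -/
noncomputable def empExcessMass {d : ℕ} (μ : Measure (Fin d → ℝ)) (t : ℝ)
    (Ω : Set (Fin d → ℝ)) : ℝ :=
  (μ Ω).toReal - t * (volume Ω).toReal

theorem empirical_clusters_monotone {d K : ℕ} (μ : Measure (Fin d → ℝ))
    [IsFiniteMeasure μ]
    (G : Set (Set (Fin d → ℝ)))
    (hG_meas : ∀ Ω ∈ G, MeasurableSet Ω)
    (hG_fin : ∀ Ω ∈ G, volume Ω ≠ ⊤)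
    (hG_union : ∀ A ∈ G, ∀ B ∈ G, A ∪ B ∈ G)
    (hG_inter : ∀ A ∈ G, ∀ B ∈ G, A ∩ B ∈ G)
    (t : Fin K → ℝ) (ht_pos : ∀ k, 0 < t k) (ht_anti : StrictAnti t)
    (Ωh : Fin K → Set (Fin d → ℝ))
    (hΩ_mem : ∀ k, Ωh k ∈ G)
    (hΩ_max : ∀ k, ∀ Ω ∈ G, empExcessMass μ (t k) Ω ≤ empExcessMass μ (t k) (Ωh k)) :
    ∀ k : Fin K,
      ((⋃ i ∈ {i : Fin K | i ≤ k}, Ωh i) ∈ G ∧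
        ∀ Ω ∈ G, empExcessMass μ (t k) Ω ≤
          empExcessMass μ (t k) (⋃ i ∈ {i : Fin K | i ≤ k}, Ωh i)) ∧
      ((⋂ i ∈ {i : Fin K | k ≤ i}, Ωh i) ∈ G ∧
        ∀ Ω ∈ G, empExcessMass μ (t k) Ω ≤
          empExcessMass μ (t k) (⋂ i ∈ {i : Fin K | k ≤ i}, Ωh i)) := by
  -- Modularity of the excess mass functional on G
  have hmod : ∀ A ∈ G, ∀ B ∈ G, ∀ s : ℝ,
      empExcessMass μ s (A ∪ B) + empExcessMass μ s (A ∩ B)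
        = empExcessMass μ s A + empExcessMass μ s B := by
    intro A hA B hB s
    have hBm := hG_meas B hB
    have h1 : μ (A ∪ B) + μ (A ∩ B) = μ A + μ B := measure_union_add_inter A hBm
    have h2 : volume (A ∪ B) + volume (A ∩ B) = volume A + volume B :=
      measure_union_add_inter A hBm
    have hAv := hG_fin A hA; have hBv := hG_fin B hB
    have hUv : volume (A ∪ B) ≠ ⊤ :=
      ne_top_of_le_ne_top (ENNReal.add_ne_top.2 ⟨hAv, hBv⟩) (measure_union_le A B)
    have hIv : volume (A ∩ B) ≠ ⊤ :=
      ne_top_of_le_ne_top hAv (measure_mono Set.inter_subset_left)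
    have e1 : (μ (A ∪ B)).toReal + (μ (A ∩ B)).toReal = (μ A).toReal + (μ B).toReal := by
      rw [← ENNReal.toReal_add (measure_ne_top _ _) (measure_ne_top _ _),
        ← ENNReal.toReal_add (measure_ne_top _ _) (measure_ne_top _ _), h1]
    have e2 : (volume (A ∪ B)).toReal + (volume (A ∩ B)).toReal
        = (volume A).toReal + (volume B).toReal := by
      rw [← ENNReal.toReal_add hUv hIv, ← ENNReal.toReal_add hAv hBv, h2]
    simp only [empExcessMass]
    linear_combination e1 - s * e2
  -- Union step
  have hstep_u : ∀ k i : Fin K, i ≤ k → ∀ A ∈ G,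
      (∀ Ω ∈ G, empExcessMass μ (t k) Ω ≤ empExcessMass μ (t k) A) →
      ∀ Ω ∈ G, empExcessMass μ (t k) Ω ≤ empExcessMass μ (t k) (A ∪ Ωh i) := by
    intro k i hik A hA hAmax Ω hΩ
    have hti : t k ≤ t i := ht_anti.antitone hik
    have hI : empExcessMass μ (t k) (A ∩ Ωh i) ≤ empExcessMass μ (t k) (Ωh i) := by
      have h1 := hΩ_max i (A ∩ Ωh i) (hG_inter A hA _ (hΩ_mem i))
      have hL : (volume (A ∩ Ωh i)).toReal ≤ (volume (Ωh i)).toReal :=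
        ENNReal.toReal_mono (hG_fin _ (hΩ_mem i)) (measure_mono Set.inter_subset_right)
      simp only [empExcessMass] at h1 ⊢
      nlinarith [mul_nonneg (sub_nonneg.2 hti) (sub_nonneg.2 hL)]
    have hm := hmod A hA (Ωh i) (hΩ_mem i) (t k)
    have := hAmax Ω hΩ
    linarith
  -- Intersection step
  have hstep_i : ∀ k i : Fin K, k ≤ i → ∀ A ∈ G,
      (∀ Ω ∈ G, empExcessMass μ (t k) Ω ≤ empExcessMass μ (t k) A) →
      ∀ Ω ∈ G, empExcessMass μ (t k) Ω ≤ empExcessMass μ (t k) (A ∩ Ωh i) := by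
    intro k i hik A hA hAmax Ω hΩ
    have hti : t i ≤ t k := ht_anti.antitone hik
    have hU : empExcessMass μ (t k) (A ∪ Ωh i) ≤ empExcessMass μ (t k) (Ωh i) := by
      have h1 := hΩ_max i (A ∪ Ωh i) (hG_union A hA _ (hΩ_mem i))
      have hUv : volume (A ∪ Ωh i) ≠ ⊤ :=
        ne_top_of_le_ne_top (ENNReal.add_ne_top.2 ⟨hG_fin A hA, hG_fin _ (hΩ_mem i)⟩)
          (measure_union_le A (Ωh i))
      have hL : (volume (Ωh i)).toReal ≤ (volume (A ∪ Ωh i)).toReal :=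
        ENNReal.toReal_mono hUv (measure_mono Set.subset_union_right)
      simp only [empExcessMass] at h1 ⊢
      nlinarith [mul_nonneg (sub_nonneg.2 hti) (sub_nonneg.2 hL)]
    have hm := hmod A hA (Ωh i) (hΩ_mem i) (t k)
    have := hAmax Ω hΩ
    linarith
  intro k
  constructor
  · -- union part
    have key : ∀ s : Finset (Fin K), (∀ i ∈ s, i ≤ k) →
        (Ωh k ∪ ⋃ i ∈ s, Ωh i) ∈ G ∧
        ∀ Ω ∈ G, empExcessMass μ (t k) Ω ≤
          empExcessMass μ (t k) (Ωh k ∪ ⋃ i ∈ s, Ωh i) := by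
      intro s
      induction s using Finset.induction with
      | empty => intro _; simpa using ⟨hΩ_mem k, hΩ_max k⟩
      | @insert a s ha ih =>
        intro hs
        have h1 := ih (fun i hi => hs i (Finset.mem_insert_of_mem hi))
        have heq : Ωh k ∪ ⋃ i ∈ insert a s, Ωh i = (Ωh k ∪ ⋃ i ∈ s, Ωh i) ∪ Ωh a := by
          ext x
          simp only [Finset.mem_insert, Set.mem_union, Set.mem_iUnion, exists_prop]
          constructor
          · rintro (h | ⟨i, (rfl | hi), hx⟩)
            · exact Or.inl (Or.inl h)
            · exact Or.inr hx
            · exact Or.inl (Or.inr ⟨i, hi, hx⟩)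
          · rintro ((h | ⟨i, hi, hx⟩) | h)
            · exact Or.inl h
            · exact Or.inr ⟨i, Or.inr hi, hx⟩
            · exact Or.inr ⟨a, Or.inl rfl, h⟩
        rw [heq]
        exact ⟨hG_union _ h1.1 _ (hΩ_mem a),
          hstep_u k a (hs a (Finset.mem_insert_self a s)) _ h1.1 h1.2⟩
    have hkey := key (Finset.Iic k) (fun i hi => Finset.mem_Iic.1 hi)
    have heq : (⋃ i ∈ {i : Fin K | i ≤ k}, Ωh i) = Ωh k ∪ ⋃ i ∈ Finset.Iic k, Ωh i := by
      ext x
      simp only [Set.mem_setOf_eq, Set.mem_iUnion, Set.mem_union, Finset.mem_Iic, exists_prop]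
      constructor
      · rintro ⟨i, hi, hx⟩; exact Or.inr ⟨i, hi, hx⟩
      · rintro (h | ⟨i, hi, hx⟩)
        · exact ⟨k, le_refl k, h⟩
        · exact ⟨i, hi, hx⟩
    rw [heq]; exact hkey
  · -- intersection part
    have key : ∀ s : Finset (Fin K), (∀ i ∈ s, k ≤ i) →
        (Ωh k ∩ ⋂ i ∈ s, Ωh i) ∈ G ∧
        ∀ Ω ∈ G, empExcessMass μ (t k) Ω ≤
          empExcessMass μ (t k) (Ωh k ∩ ⋂ i ∈ s, Ωh i) := by
      intro s
      induction s using Finset.induction with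
      | empty => intro _; simpa using ⟨hΩ_mem k, hΩ_max k⟩
      | @insert a s ha ih =>
        intro hs
        have h1 := ih (fun i hi => hs i (Finset.mem_insert_of_mem hi))
        have heq : Ωh k ∩ ⋂ i ∈ insert a s, Ωh i = (Ωh k ∩ ⋂ i ∈ s, Ωh i) ∩ Ωh a := by
          ext x
          simp only [Finset.mem_insert, Set.mem_inter_iff, Set.mem_iInter]
          constructor
          · rintro ⟨hk, h⟩
            exact ⟨⟨hk, fun i hi => h i (Or.inr hi)⟩, h a (Or.inl rfl)⟩
          · rintro ⟨⟨hk, h⟩, ha'⟩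
            refine ⟨hk, fun i hi => ?_⟩
            rcases hi with rfl | hi
            · exact ha'
            · exact h i hi
        rw [heq]
        exact ⟨hG_inter _ h1.1 _ (hΩ_mem a),
          hstep_i k a (hs a (Finset.mem_insert_self a s)) _ h1.1 h1.2⟩
    have hkey := key (Finset.Ici k) (fun i hi => Finset.mem_Ici.1 hi)
    have heq : (⋂ i ∈ {i : Fin K | k ≤ i}, Ωh i) = Ωh k ∩ ⋂ i ∈ Finset.Ici k, Ωh i := by
      ext x
      simp only [Set.mem_setOf_eq, Set.mem_iInter, Set.mem_inter_iff, Finset.mem_Ici]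
      constructor
      · intro h; exact ⟨h k (le_refl k), fun i hi => h i hi⟩
      · rintro ⟨hk, h⟩ i hi; exact h i hi
    rw [heq]; exact hkey
end

section
/- The key inequality behind the monotonicity of empirical clusters: if t' ≤ t, A maximizes μ(Ω) − t·Leb(Ω) and B maximizes μ(Ω) − t'·Leb(Ω) over a class G closed under unions and intersections, then A ∪ B is a maximizer for parameter t' and A ∩ B is a maximizer for parameter t. -/
open MeasureTheory

theorem union_inter_maximizers {d : ℕ} (μ : Measure (Fin d → ℝ))
    [IsFiniteMeasure μ]
    (G : Set (Set (Fin d → ℝ)))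
    (hG_meas : ∀ Ω ∈ G, MeasurableSet Ω)
    (hG_fin : ∀ Ω ∈ G, volume Ω ≠ ⊤)
    (hG_union : ∀ A ∈ G, ∀ B ∈ G, A ∪ B ∈ G)
    (hG_inter : ∀ A ∈ G, ∀ B ∈ G, A ∩ B ∈ G)
    (t t' : ℝ) (ht' : 0 < t') (htt' : t' ≤ t)
    (A B : Set (Fin d → ℝ)) (hA : A ∈ G) (hB : B ∈ G)
    (hA_max : ∀ Ω ∈ G, empExcessMass μ t Ω ≤ empExcessMass μ t A)
    (hB_max : ∀ Ω ∈ G, empExcessMass μ t' Ω ≤ empExcessMass μ t' B) :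
    (∀ Ω ∈ G, empExcessMass μ t' Ω ≤ empExcessMass μ t' (A ∪ B)) ∧
    (∀ Ω ∈ G, empExcessMass μ t Ω ≤ empExcessMass μ t (A ∩ B)) := by
  have hU : A ∪ B ∈ G := hG_union A hA B hB
  have hI : A ∩ B ∈ G := hG_inter A hA B hB
  have hmB : MeasurableSet B := hG_meas B hB
  -- measure identities
  have hμadd : μ (A ∪ B) + μ (A ∩ B) = μ A + μ B := measure_union_add_inter A hmB
  have hvadd : volume (A ∪ B) + volume (A ∩ B) = volume A + volume B :=
    measure_union_add_inter A hmB
  have hμ : (μ (A ∪ B)).toReal + (μ (A ∩ B)).toReal = (μ A).toReal + (μ B).toReal := by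
    rw [← ENNReal.toReal_add (measure_ne_top μ _) (measure_ne_top μ _),
        ← ENNReal.toReal_add (measure_ne_top μ _) (measure_ne_top μ _), hμadd]
  have hv : (volume (A ∪ B)).toReal + (volume (A ∩ B)).toReal
      = (volume A).toReal + (volume B).toReal := by
    rw [← ENNReal.toReal_add (hG_fin _ hU) (hG_fin _ hI),
        ← ENNReal.toReal_add (hG_fin _ hA) (hG_fin _ hB), hvadd]
  have hvi : (volume (A ∩ B)).toReal ≤ (volume A).toReal :=
    ENNReal.toReal_mono (hG_fin _ hA) (measure_mono Set.inter_subset_left)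
  have hvu : (volume B).toReal ≤ (volume (A ∪ B)).toReal :=
    ENNReal.toReal_mono (hG_fin _ hU) (measure_mono Set.subset_union_right)
  have h1 : empExcessMass μ t (A ∩ B) ≤ empExcessMass μ t A := hA_max _ hI
  have h2 : empExcessMass μ t' (A ∪ B) ≤ empExcessMass μ t' B := hB_max _ hU
  have key1 : empExcessMass μ t' B ≤ empExcessMass μ t' (A ∪ B) := by
    simp only [empExcessMass] at h1 ⊢
    nlinarith [mul_nonneg (sub_nonneg.2 htt') (sub_nonneg.2 hvi)]
  have key2 : empExcessMass μ t A ≤ empExcessMass μ t (A ∩ B) := by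
    simp only [empExcessMass] at h2 ⊢
    nlinarith [mul_nonneg (sub_nonneg.2 htt') (sub_nonneg.2 hvu)]
  exact ⟨fun Ω hΩ => (hB_max Ω hΩ).trans key1, fun Ω hΩ => (hA_max Ω hΩ).trans key2⟩
end

section
/- Bias control for piecewise-constant models: let F = {F_i}_{i≥1} be a countable measurable partition of ℝ^d with each Leb(F_i) ∈ (0, ∞), let f_F be the conditional expectation of f on the partition, f_F(x) = Σ_i 1_{x ∈ F_i} (1/Leb(F_i)) ∫_{F_i} f, and let EM*_σ(F)(t) be the supremum of P(X ∈ Ω) − t·Leb(Ω) over Ω in the σ-algebra generated by F. Then for every t ∈ [0, ‖f‖∞], 0 ≤ EM*(t) − EM*_σ(F)(t) ≤ ‖f − f_F‖_{L¹}. -/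
open MeasureTheory

/-- Supremum of the excess-mass functional restricted to a class `C` of sets. -/
noncomputable def EMclass {d : ℕ} (f : (Fin d → ℝ) → ℝ)
    (C : Set (Set (Fin d → ℝ))) (t : ℝ) : ℝ :=
  ⨆ Ω : {Ω : Set (Fin d → ℝ) // Ω ∈ C ∧ volume Ω ≠ ⊤}, excessMass f t Ω

/-- Best piecewise-constant approximation of `f` on the partition `F`. -/
noncomputable def partApprox {d : ℕ} (f : (Fin d → ℝ) → ℝ)
    (F : ℕ → Set (Fin d → ℝ)) (x : Fin d → ℝ) : ℝ :=
  ∑' i, Set.indicator (F i)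
    (fun _ => (∫ y in F i, f y) / (volume (F i)).toReal) x

theorem bias_control {d : ℕ} (f : (Fin d → ℝ) → ℝ)
    (hf_meas : Measurable f) (hf_nonneg : ∀ x, 0 ≤ f x)
    (hf_int : Integrable f) (hf_prob : (∫ x, f x) = 1)
    (C : ℝ) (hf_bdd : ∀ x, f x ≤ C)
    (F : ℕ → Set (Fin d → ℝ))
    (hF_meas : ∀ i, MeasurableSet (F i))
    (hF_disj : Pairwise (Function.onFun Disjoint F))
    (hF_cover : (⋃ i, F i) = Set.univ)
    (hF_pos : ∀ i, 0 < volume (F i)) (hF_fin : ∀ i, volume (F i) ≠ ⊤) :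
    ∀ t ∈ Set.Icc (0 : ℝ) (essSup f volume),
      0 ≤ EMstar f t -
          EMclass f {Ω | MeasurableSet[MeasurableSpace.generateFrom (Set.range F)] Ω} t ∧
      EMstar f t -
          EMclass f {Ω | MeasurableSet[MeasurableSpace.generateFrom (Set.range F)] Ω} t ≤
        ∫ x, |f x - partApprox f F x| := by
  intro t ht
  obtain ⟨ht0, -⟩ := ht
  set Cs : Set (Set (Fin d → ℝ)) :=
    {Ω | MeasurableSet[MeasurableSpace.generateFrom (Set.range F)] Ω} with hCs
  set g : (Fin d → ℝ) → ℝ := partApprox f F with hg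
  set a : ℕ → ℝ := fun i => ∫ y in F i, f y with ha
  set v : ℕ → ℝ := fun i => (volume (F i)).toReal with hv
  set c : ℕ → ℝ := fun i => a i / v i with hc
  have hv_pos : ∀ i, 0 < v i := fun i => ENNReal.toReal_pos (hF_pos i).ne' (hF_fin i)
  have ha_nonneg : ∀ i, 0 ≤ a i := fun i =>
    setIntegral_nonneg (hF_meas i) fun x _ => hf_nonneg x
  have hc_nonneg : ∀ i, 0 ≤ c i := fun i => div_nonneg (ha_nonneg i) (hv_pos i).le
  have hcv : ∀ i, c i * v i = a i := fun i => div_mul_cancel₀ _ (hv_pos i).ne'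
  -- the cell integrals sum to 1
  have hsum_a : HasSum a 1 := by
    have h := hasSum_integral_iUnion (μ := volume) hF_meas hF_disj
      (by rw [hF_cover]; exact hf_int.integrableOn)
    rwa [hF_cover, setIntegral_univ, hf_prob] at h
  -- g equals c i on F i
  have hg_eq : ∀ i, ∀ x ∈ F i, g x = c i := by
    intro i x hx
    rw [hg]
    unfold partApprox
    rw [tsum_eq_single i]
    · exact Set.indicator_of_mem hx _
    · intro j hj
      refine Set.indicator_of_notMem (fun hxj => ?_) _
      exact Set.disjoint_left.mp (hF_disj hj) hxj hx
  have hmem : ∀ x : Fin d → ℝ, ∃ i, x ∈ F i := by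
    intro x
    have : x ∈ ⋃ i, F i := hF_cover ▸ Set.mem_univ x
    exact Set.mem_iUnion.mp this
  have hg_meas : Measurable g := by
    intro s _
    have : g ⁻¹' s = ⋃ i ∈ {i | c i ∈ s}, F i := by
      ext x
      obtain ⟨i, hi⟩ := hmem x
      simp only [Set.mem_preimage, Set.mem_iUnion, Set.mem_setOf_eq]
      constructor
      · intro hx; exact ⟨i, by rwa [← hg_eq i x hi], hi⟩
      · rintro ⟨j, hj, hxj⟩; rwa [hg_eq j x hxj]
    rw [this]
    exact MeasurableSet.biUnion (Set.to_countable _) fun i _ => hF_meas i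
  have hg_nonneg : ∀ x, 0 ≤ g x := by
    intro x
    obtain ⟨i, hi⟩ := hmem x
    rw [hg_eq i x hi]; exact hc_nonneg i
  -- integrability of g
  have hg_int : Integrable g := by
    refine ⟨hg_meas.aestronglyMeasurable, ?_⟩
    rw [hasFiniteIntegral_iff_norm]
    have hnorm : ∀ x, ENNReal.ofReal ‖g x‖ = ENNReal.ofReal (g x) := by
      intro x; rw [Real.norm_of_nonneg (hg_nonneg x)]
    simp_rw [hnorm]
    have hcell : ∀ i, ∫⁻ x in F i, ENNReal.ofReal (g x) = ENNReal.ofReal (a i) := by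
      intro i
      rw [setLIntegral_congr_fun (hF_meas i)
        (fun x hx => by rw [hg_eq i x hx])]
      rw [setLIntegral_const, ← ENNReal.ofReal_toReal (hF_fin i),
        ← ENNReal.ofReal_mul (hc_nonneg i), hcv i]
    calc ∫⁻ x, ENNReal.ofReal (g x)
        = ∫⁻ x in ⋃ i, F i, ENNReal.ofReal (g x) := by rw [hF_cover, Measure.restrict_univ]
      _ = ∑' i, ∫⁻ x in F i, ENNReal.ofReal (g x) :=
          lintegral_iUnion hF_meas hF_disj _
      _ = ∑' i, ENNReal.ofReal (a i) := by simp_rw [hcell]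
      _ = ENNReal.ofReal 1 := by
          rw [← ENNReal.ofReal_tsum_of_nonneg ha_nonneg hsum_a.summable,
            hsum_a.tsum_eq]
      _ < ⊤ := ENNReal.ofReal_lt_top
  have hdiff_int : Integrable (fun x => f x - g x) := hf_int.sub hg_int
  have habs_int : Integrable (fun x => |f x - g x|) := hdiff_int.abs
  set I : ℝ := ∫ x, |f x - g x| with hI
  -- uniform bound on excess mass for measurable finite-volume sets
  have hbound : ∀ Ω : Set (Fin d → ℝ), MeasurableSet Ω → volume Ω ≠ ⊤ →
      excessMass f t Ω ≤ 1 := by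
    intro Ω hm hfin
    unfold excessMass
    have h1 : (∫ x in Ω, f x) ≤ 1 := by
      rw [← hf_prob]
      exact setIntegral_le_integral hf_int (ae_of_all _ hf_nonneg)
    have h2 : 0 ≤ t * (volume Ω).toReal := mul_nonneg ht0 ENNReal.toReal_nonneg
    linarith
  -- measurability of class sets
  have hGle : MeasurableSpace.generateFrom (Set.range F) ≤
      (inferInstance : MeasurableSpace (Fin d → ℝ)) := by
    refine MeasurableSpace.generateFrom_le ?_
    rintro s ⟨i, rfl⟩
    exact hF_meas i
  have hclass_meas : ∀ Ω ∈ Cs, MeasurableSet Ω := fun Ω h => hGle _ h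
  have hne_star : Nonempty {Ω : Set (Fin d → ℝ) // MeasurableSet Ω ∧ volume Ω ≠ ⊤} :=
    ⟨⟨∅, MeasurableSet.empty, by simp⟩⟩
  have hne_class : Nonempty {Ω : Set (Fin d → ℝ) // Ω ∈ Cs ∧ volume Ω ≠ ⊤} :=
    ⟨⟨∅, @MeasurableSet.empty _ (MeasurableSpace.generateFrom (Set.range F)), by simp⟩⟩
  have hbdd_star : BddAbove (Set.range fun Ω :
      {Ω : Set (Fin d → ℝ) // MeasurableSet Ω ∧ volume Ω ≠ ⊤} => excessMass f t Ω) := by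
    refine ⟨1, ?_⟩
    rintro x ⟨⟨Ω, hm, hfin⟩, rfl⟩
    exact hbound Ω hm hfin
  have hbdd_class : BddAbove (Set.range fun Ω :
      {Ω : Set (Fin d → ℝ) // Ω ∈ Cs ∧ volume Ω ≠ ⊤} => excessMass f t Ω) := by
    refine ⟨1, ?_⟩
    rintro x ⟨⟨Ω, hm, hfin⟩, rfl⟩
    exact hbound Ω (hclass_meas Ω hm) hfin
  constructor
  · -- EMclass ≤ EMstar
    rw [sub_nonneg]
    refine ciSup_le ?_
    rintro ⟨Ω, hm, hfin⟩
    exact le_ciSup hbdd_star ⟨Ω, hclass_meas Ω hm, hfin⟩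
  · -- main bound
    rw [sub_le_iff_le_add]
    refine ciSup_le ?_
    rintro ⟨Ω, hΩm, hΩfin⟩
    -- notation for pieces of Ω
    set w : ℕ → ℝ := fun i => (volume (Ω ∩ F i)).toReal with hw
    have hw_nonneg : ∀ i, 0 ≤ w i := fun i => ENNReal.toReal_nonneg
    have hwv : ∀ i, w i ≤ v i := fun i =>
      ENNReal.toReal_mono (hF_fin i) (measure_mono Set.inter_subset_right)
    have hΩunion : (⋃ i, Ω ∩ F i) = Ω := by
      rw [← Set.inter_iUnion, hF_cover, Set.inter_univ]
    have hmeas' : ∀ i, MeasurableSet (Ω ∩ F i) := fun i => hΩm.inter (hF_meas i)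
    have hdisj' : Pairwise (Function.onFun Disjoint fun i => Ω ∩ F i) := fun i j hij =>
      ((hF_disj hij).mono Set.inter_subset_right Set.inter_subset_right)
    -- volume of Ω is the sum of the w i
    have hvolsum : HasSum w (volume Ω).toReal := by
      have h1 : volume Ω = ∑' i, volume (Ω ∩ F i) := by
        rw [← measure_iUnion hdisj' hmeas', hΩunion]
      have hfin' : ∀ i, volume (Ω ∩ F i) ≠ ⊤ := fun i =>
        (lt_of_le_of_lt (measure_mono Set.inter_subset_left) hΩfin.lt_top).ne
      have h2 : (volume Ω).toReal = ∑' i, w i := by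
        rw [h1, ENNReal.tsum_toReal_eq hfin']
      have hsumw : Summable w := by
        apply ENNReal.summable_toReal
        rw [← h1]; exact hΩfin
      rw [h2]; exact hsumw.hasSum
    -- integral of g over Ω
    have hgint : HasSum (fun i => c i * w i) (∫ x in Ω, g x) := by
      have h1 : HasSum (fun i => ∫ x in Ω ∩ F i, g x) (∫ x in ⋃ i, Ω ∩ F i, g x) :=
        hasSum_integral_iUnion hmeas' hdisj' (hg_int.integrableOn)
      rw [hΩunion] at h1
      have h2 : ∀ i, (∫ x in Ω ∩ F i, g x) = c i * w i := by
        intro i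
        rw [setIntegral_congr_fun (hmeas' i)
          (fun x hx => hg_eq i x hx.2), setIntegral_const, smul_eq_mul, mul_comm]
        rfl
      simpa only [h2] using h1
    -- key chain of inequalities
    have step1 : excessMass f t Ω ≤ ((∫ x in Ω, g x) - t * (volume Ω).toReal) + I := by
      unfold excessMass
      have hsplit : (∫ x in Ω, f x) = (∫ x in Ω, f x - g x) + ∫ x in Ω, g x := by
        rw [← integral_add (hdiff_int.integrableOn) (hg_int.integrableOn)]
        simp
      have h1 : (∫ x in Ω, f x - g x) ≤ ∫ x in Ω, |f x - g x| :=
        integral_mono (hdiff_int.integrableOn) (habs_int.integrableOn)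
          fun x => le_abs_self _
      have h2 : (∫ x in Ω, |f x - g x|) ≤ I :=
        setIntegral_le_integral habs_int (ae_of_all _ fun x => abs_nonneg _)
      linarith
    -- rewrite the middle term as a tsum
    have step2 : (∫ x in Ω, g x) - t * (volume Ω).toReal
        = ∑' i, (c i - t) * w i := by
      have htw : HasSum (fun i => t * w i) (t * (volume Ω).toReal) := hvolsum.mul_left t
      have h := hgint.sub htw
      rw [h.tsum_eq.symm]
      congr 1
      funext i
      ring
    have hsub_summable : Summable (fun i => (c i - t) * w i) := by
      have := (hgint.summable.sub (hvolsum.mul_left t).summable)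
      simpa only [sub_mul] using this
    have hS_summable : Summable (fun i => max (c i - t) 0 * v i) := by
      refine Summable.of_nonneg_of_le
        (fun i => mul_nonneg (le_max_right _ _) (hv_pos i).le) (fun i => ?_)
        hsum_a.summable
      rcases le_or_gt t (c i) with h | h
      · rw [max_eq_left (by linarith)]
        calc (c i - t) * v i ≤ c i * v i :=
              mul_le_mul_of_nonneg_right (by linarith) (hv_pos i).le
          _ = a i := hcv i
      · rw [max_eq_right (by linarith)]
        simpa using ha_nonneg i
    have step3 : (∑' i, (c i - t) * w i) ≤ ∑' i, max (c i - t) 0 * v i := by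
      refine Summable.tsum_le_tsum (fun i => ?_) hsub_summable hS_summable
      rcases le_or_gt t (c i) with h | h
      · rw [max_eq_left (by linarith)]
        exact mul_le_mul_of_nonneg_left (hwv i) (by linarith)
      · rw [max_eq_right (by linarith)]
        calc (c i - t) * w i ≤ 0 := mul_nonpos_of_nonpos_of_nonneg (by linarith) (hw_nonneg i)
          _ = 0 * v i := by ring
    -- the tail sum is bounded by EMclass
    have step4 : (∑' i, max (c i - t) 0 * v i) ≤ EMclass f Cs t := by
      refine Summable.tsum_le_of_sum_le hS_summable (fun s => ?_)
      set s' : Finset ℕ := s.filter (fun i => t ≤ c i) with hs'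
      have hsum_eq : (∑ i ∈ s, max (c i - t) 0 * v i) = ∑ i ∈ s', (c i - t) * v i := by
        rw [hs', Finset.sum_filter]
        refine Finset.sum_congr rfl (fun i _ => ?_)
        rcases le_or_gt t (c i) with h | h
        · rw [if_pos h, max_eq_left (by linarith)]
        · rw [if_neg (not_le.mpr h), max_eq_right (by linarith), zero_mul]
      set Ω' : Set (Fin d → ℝ) := ⋃ i ∈ s', F i with hΩ'
      have hΩ'mem : MeasurableSet[MeasurableSpace.generateFrom (Set.range F)] Ω' := by
        rw [hΩ']
        exact MeasurableSet.biUnion s'.countable_toSet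
          (fun i _ => MeasurableSpace.measurableSet_generateFrom ⟨i, rfl⟩)
      have hΩ'fin : volume Ω' ≠ ⊤ := by
        refine ((measure_biUnion_finset_le s' F).trans_lt ?_).ne
        exact ENNReal.sum_lt_top.mpr fun i _ => (hF_fin i).lt_top
      have hpair : (↑s' : Set ℕ).Pairwise (Function.onFun Disjoint F) :=
        hF_disj.set_pairwise _
      have hint : (∫ x in Ω', f x) = ∑ i ∈ s', a i :=
        integral_biUnion_finset s' (fun i _ => hF_meas i) hpair
          (fun i _ => hf_int.integrableOn)
      have hvol : (volume Ω').toReal = ∑ i ∈ s', v i := by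
        rw [hΩ', measure_biUnion_finset hpair (fun i _ => hF_meas i),
          ENNReal.toReal_sum (fun i _ => hF_fin i)]
      have hEM : excessMass f t Ω' = ∑ i ∈ s', (c i - t) * v i := by
        unfold excessMass
        rw [hint, hvol, Finset.mul_sum, ← Finset.sum_sub_distrib]
        refine Finset.sum_congr rfl (fun i _ => ?_)
        rw [← hcv i]; ring
      rw [hsum_eq, ← hEM]
      exact le_ciSup hbdd_class ⟨Ω', hΩ'mem, hΩ'fin⟩
    calc excessMass f t Ω ≤ ((∫ x in Ω, g x) - t * (volume Ω).toReal) + I := step1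
      _ = (∑' i, (c i - t) * w i) + I := by rw [step2]
      _ ≤ I + EMclass f Cs t := by linarith
end
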